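/- Fix integers p, q, k with 0 < k < p, gcd(k,p) = 1 and gcd(q,p) = 1, and let A₁A₂⋯A_M be the associated Berge word with partial sums S_n. Then every index n ∈ {1,…,M} at which the sequence S₁,…,S_M attains its maximum value satisfies A_n = Y, and every index n ∈ {1,…,M} at which it attains its minimum value satisfies n < M and A_{n+1} = Y. -/
import Mathlib


namespace Berge

/-- `E i = 1` if the residue of `i·q` modulo `p` lies in `{0, 1, …, k−1}`, and `0`
otherwise. -/
def E (p q k : ℕ) (i : ℕ) : ℕ := if (i * q) % p < k then 1 else 0

/-- The Berge word associated to `(p,q,k)`: the concatenation, for `i = 1, …, p` in order,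
of the letter `X` (encoded `false`) followed by `E i` copies of the letter `Y`
(encoded `true`). -/
def word (p q k : ℕ) : List Bool :=
  (List.range p).flatMap fun i => false :: List.replicate (E p q k (i + 1)) true

/-- The weight `χ` with `χ(X) = −k` and `χ(Y) = p`. -/
def chi (p k : ℕ) : Bool → ℤ := fun b => if b then (p : ℤ) else -(k : ℤ)

/-- The partial sum `S_n = χ(A₁) + ⋯ + χ(A_n)` of the Berge word. -/
def S (p q k : ℕ) (n : ℕ) : ℤ := (((word p q k).take n).map (chi p k)).sum

end Berge

namespace BergeAux
open Berge

/-- The map `i ↦ (i·q) mod p` is a bijection of `range p`, so the number of `i < p`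
with `(i·q) % p < k` is `k`. -/
lemma sumE_range (p q k : ℕ) (hp : 0 < p) (hkp : k ≤ p) (hq : Nat.gcd q p = 1) :
    ∑ i ∈ Finset.range p, E p q k i = k := by
  classical
  have hsum : ∑ i ∈ Finset.range p, E p q k i
      = ((Finset.range p).filter (fun i => (i * q) % p < k)).card := by
    rw [Finset.card_filter]
    simp [E]
  set f : ℕ → ℕ := fun i => (i * q) % p with hf
  have hinj : Set.InjOn f (Finset.range p) := by
    intro i hi j hj hij
    simp only [Finset.coe_range, Set.mem_Iio] at hi hj
    have : i ≡ j [MOD p] := by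
      have h1 : i * q ≡ j * q [MOD p] := by
        simpa [Nat.ModEq, hf] using hij
      exact Nat.ModEq.cancel_right_of_coprime (Nat.coprime_comm.mp hq) h1
    have := this.symm
    rw [Nat.ModEq, Nat.mod_eq_of_lt hi, Nat.mod_eq_of_lt hj] at this
    omega
  have himage : (Finset.range p).image f = Finset.range p := by
    apply Finset.eq_of_subset_of_card_le
    · intro x hx
      simp only [Finset.mem_image] at hx
      obtain ⟨i, _, rfl⟩ := hx
      simp [f, Nat.mod_lt _ hp]
    · rw [Finset.card_image_of_injOn hinj]
  have hfilter : ((Finset.range p).filter (fun i => f i < k)).card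
      = ((Finset.range p).filter (fun r => r < k)).card := by
    rw [← Finset.card_image_of_injOn (hinj.mono (Finset.coe_subset.mpr (Finset.filter_subset _ _)))]
    congr 1
    conv_rhs => rw [← himage, Finset.filter_image]
  have hcard : ((Finset.range p).filter (fun r => r < k)).card = k := by
    have : (Finset.range p).filter (fun r => r < k) = Finset.range k := by
      ext r; simp; omega
    simp [this]
  rw [hsum]
  simpa [f] using hfilter.trans hcard

lemma sumE_shift (p q k : ℕ) (hk0 : 0 < k) :
    ∑ i ∈ Finset.range p, E p q k (i + 1) = ∑ i ∈ Finset.range p, E p q k i := by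
  have h0 : E p q k 0 = 1 := by simp [E, hk0]
  have hp' : E p q k p = 1 := by simp [E, Nat.mul_mod_right, hk0]
  have h1 := Finset.sum_range_succ (fun i => E p q k i) p
  have h2 := Finset.sum_range_succ' (fun i => E p q k i) p
  omega

lemma length_word (p q k : ℕ) : 0 < p → 0 < (word p q k).length := by
  intro hp
  rcases Nat.exists_eq_add_of_lt hp with ⟨m, rfl⟩
  simp only [word, Nat.zero_add, List.range_succ_eq_map, List.flatMap_cons]
  simp

lemma word_head (p q k : ℕ) (hp : 0 < p) : (word p q k).getD 0 false = false := by
  rcases Nat.exists_eq_add_of_lt hp with ⟨m, rfl⟩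
  simp only [word, Nat.zero_add, List.range_succ_eq_map, List.flatMap_cons]
  simp

/-- The total sum of the weights over the Berge word is `0`. -/
lemma total_sum (p q k : ℕ) (hk0 : 0 < k) (hkp : k < p) (hq : Nat.gcd q p = 1) :
    S p q k (word p q k).length = 0 := by
  have hp : 0 < p := hk0.trans hkp
  have hE : ∑ i ∈ Finset.range p, E p q k (i + 1) = k := by
    rw [sumE_shift p q k hk0, sumE_range p q k hp hkp.le hq]
  unfold S
  rw [List.take_length]
  unfold word
  rw [List.map_flatMap]
  rw [List.flatMap, List.sum_flatten, List.map_map]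
  have : ((List.range p).map
      ((List.sum ∘ fun i => List.map (chi p k) (false :: List.replicate (E p q k (i + 1)) true)))).sum
      = ∑ i ∈ Finset.range p, (-(k : ℤ) + (E p q k (i + 1)) * p) := by
    have : ∀ i, (List.sum ∘ fun i => List.map (chi p k)
        (false :: List.replicate (E p q k (i + 1)) true)) i
        = -(k : ℤ) + (E p q k (i + 1)) * p := by
      intro i
      simp [chi, List.map_replicate, List.sum_replicate, mul_comm]
    rw [funext this]
    rfl
  rw [this, Finset.sum_add_distrib, ← Finset.sum_mul, ← Nat.cast_sum, hE]
  simp [mul_comm]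

/-- The step relation: `S (n+1) = S n + χ(A_{n+1})`. -/
lemma S_succ (p q k : ℕ) (n : ℕ) (hn : n < (word p q k).length) :
    S p q k (n + 1) = S p q k n + chi p k ((word p q k).getD n false) := by
  unfold S
  rw [List.take_succ]
  have h1 : (word p q k)[n]? = some ((word p q k).getD n false) := by
    rw [List.getD_eq_getElem _ _ hn, List.getElem?_eq_getElem hn]
  rw [h1]
  simp

end BergeAux

open Berge BergeAux in
/-- Every index `n ∈ {1,…,M}` at which the partial-sum sequence of the Berge word attains
its maximum satisfies `Aₙ = Y`, and every index at which it attains its minimum satisfies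
`n < M` and `A_{n+1} = Y`. -/
theorem berge_extrema_on_Y (p q k : ℕ)
    (hk0 : 0 < k) (hkp : k < p) (hk : Nat.gcd k p = 1) (hq : Nat.gcd q p = 1) :
    (∀ n ∈ Finset.Icc 1 (word p q k).length,
      (∀ m ∈ Finset.Icc 1 (word p q k).length, S p q k m ≤ S p q k n) →
      (word p q k).getD (n - 1) false = true) ∧
    (∀ n ∈ Finset.Icc 1 (word p q k).length,
      (∀ m ∈ Finset.Icc 1 (word p q k).length, S p q k n ≤ S p q k m) →
      n < (word p q k).length ∧ (word p q k).getD n false = true) := by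
  have hp : 0 < p := hk0.trans hkp
  set M := (word p q k).length with hM
  have hM1 : 1 ≤ M := length_word p q k hp
  have hS0 : S p q k 0 = 0 := by simp [S]
  have hS1 : S p q k 1 = -(k : ℤ) := by
    rw [show (1 : ℕ) = 0 + 1 from rfl, S_succ p q k 0 (by omega), hS0,
      word_head p q k hp]
    simp [chi]
  have hSM : S p q k M = 0 := total_sum p q k hk0 hkp hq
  have hMmem : M ∈ Finset.Icc 1 M := by simp [hM1]
  have h1mem : (1 : ℕ) ∈ Finset.Icc 1 M := by simp [hM1]
  constructor
  · intro n hn hmax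
    simp only [Finset.mem_Icc] at hn
    by_contra hfalse
    have hb : (word p q k).getD (n - 1) false = false := by
      cases h : (word p q k).getD (n - 1) false
      · rfl
      · exact absurd h hfalse
    have hstep : S p q k n = S p q k (n - 1) - k := by
      have := S_succ p q k (n - 1) (by omega)
      rw [hb] at this
      simp only [chi] at this
      rw [show n - 1 + 1 = n from by omega] at this
      simpa [sub_eq_add_neg] using this
    rcases Nat.eq_or_lt_of_le hn.1 with h1 | h2
    · -- n = 1 : S 1 = -k < 0 = S M, contradicting maximality
      have := hmax M hMmem
      rw [← h1, hS1, hSM] at this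
      have : (0:ℤ) < k := by exact_mod_cast hk0
      omega
    · -- n ≥ 2 : S (n-1) ≤ S n = S (n-1) - k, contradiction
      have hmem : n - 1 ∈ Finset.Icc 1 M := by simp; omega
      have := hmax (n - 1) hmem
      have hkpos : (0:ℤ) < k := by exact_mod_cast hk0
      omega
  · intro n hn hmin
    simp only [Finset.mem_Icc] at hn
    have hnM : n < M := by
      rcases Nat.eq_or_lt_of_le hn.2 with h1 | h2
      · exfalso
        have := hmin 1 h1mem
        rw [h1, hSM, hS1] at this
        have : (0:ℤ) < k := by exact_mod_cast hk0
        omega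
      · exact h2
    refine ⟨hnM, ?_⟩
    by_contra hfalse
    have hb : (word p q k).getD n false = false := by
      cases h : (word p q k).getD n false
      · rfl
      · exact absurd h hfalse
    have hstep := S_succ p q k n hnM
    rw [hb] at hstep
    simp only [chi] at hstep
    have hmem : n + 1 ∈ Finset.Icc 1 M := by simp; omega
    have := hmin (n + 1) hmem
    have hkpos : (0:ℤ) < k := by exact_mod_cast hk0
    simp only [if_neg Bool.false_ne_true] at hstep
    omega
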